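/- Let G be a group and n ≥ 2. Consider a finite directed graph with vertex set {1, …, n} and edges E₁, …, E_m, where edge E_i has origin o(i) and terminus t(i) with o(i) < t(i), and carries a label u_i ∈ G; assume the enumeration of edges satisfies: whenever t(i) = o(j), then i < j. Let F be the free group with basis v₁, …, v_n, and in the free product G * F set g_i = v_{o(i)} · u_i · v_{t(i)}⁻¹ for i = 1, …, m. Then there exist indices i₁ < i₂ < … < i_k (k ≥ 1) with g_{i₁} g_{i₂} ⋯ g_{i_k} = v₁ v_n⁻¹ in G * F if and only if there is a directed edge path E_{i₁}, E_{i₂}, …, E_{i_k} from vertex 1 to vertex n (i.e., o(i₁) = 1, t(i_k) = n, and t(i_j) = o(i_{j+1}) for all j) whose labels satisfy u_{i₁} u_{i₂} ⋯ u_{i_k} = 1 in G. -/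

import Mathlib

set_option linter.unusedSectionVars false

namespace AgpSsp

variable {α : Type*} [DecidableEq α] [LinearOrder α]

/-- the free-group block `v_x v_y⁻¹` -/
def blk (p : α × α) : FreeGroup α := FreeGroup.of p.1 * (FreeGroup.of p.2)⁻¹

/-- the word of a list of blocks -/
def word : List (α × α) → List (α × Bool)
  | [] => []
  | p :: q => (p.1, true) :: (p.2, false) :: word q

theorem blk_eq_mk (p : α × α) : blk p = FreeGroup.mk [(p.1, true), (p.2, false)] := by
  have h1 : FreeGroup.of p.1 = FreeGroup.mk [(p.1, true)] := rfl
  have h2 : (FreeGroup.of p.2)⁻¹ = FreeGroup.mk [(p.2, false)] := by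
    rw [show FreeGroup.of p.2 = FreeGroup.mk [(p.2, true)] from rfl, FreeGroup.inv_mk]
    rfl
  rw [blk, h1, h2, FreeGroup.mul_mk]
  rfl

theorem prod_blk : ∀ q : List (α × α), (q.map blk).prod = FreeGroup.mk (word q)
  | [] => by simp [word]; rfl
  | p :: q => by
    rw [List.map_cons, List.prod_cons, prod_blk q, blk_eq_mk, FreeGroup.mul_mk]
    rfl

/-- non-reducible adjacency -/
def NR (a b : α × Bool) : Prop := ¬(a.1 = b.1 ∧ a.2 = !b.2)

theorem reduce_eq_self : ∀ L : List (α × Bool), List.Chain' NR L → FreeGroup.reduce L = L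
  | [] => fun _ => rfl
  | x :: L => fun h => by
    have hL := reduce_eq_self L h.tail
    rw [FreeGroup.reduce.cons, hL]
    cases L with
    | nil => rfl
    | cons hd tl =>
      have : NR x hd := (List.isChain_cons_cons.mp h).1
      simp only [if_neg this]

theorem chain'_word : ∀ q : List (α × α), (∀ p ∈ q, p.1 < p.2) →
    List.Chain' (fun p p' : α × α => p.2 ≠ p'.1) q → List.Chain' NR (word q)
  | [] => fun _ _ => by simp [word, List.Chain']
  | [p] => fun hlt _ => by
    show List.Chain' NR [(p.1, true), (p.2, false)]
    exact List.isChain_pair.mpr (fun h => absurd h.1 (ne_of_lt (hlt p (by simp))))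
  | p :: p' :: q => fun hlt hch => by
    have h1 : p.1 < p.2 := hlt p (by simp)
    have h2 : p.2 ≠ p'.1 := (List.isChain_cons_cons.mp hch).1
    have ih := chain'_word (p' :: q) (fun x hx => hlt x (List.mem_cons_of_mem _ hx))
      (List.isChain_cons_cons.mp hch).2
    show List.Chain' NR ((p.1, true) :: (p.2, false) :: (p'.1, true) :: (p'.2, false) :: word q)
    refine List.isChain_cons_cons.mpr ⟨?_, List.isChain_cons_cons.mpr ⟨?_, ih⟩⟩
    · exact fun h => absurd h.1 (ne_of_lt h1)
    · exact fun h => h2 h.1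

/-- left-to-right reduction of a list of blocks -/
def proc : List (α × α) → List (α × α)
  | [] => []
  | p :: q => match proc q with
    | [] => [p]
    | r :: rs => if p.2 = r.1 then (p.1, r.2) :: rs else p :: r :: rs

theorem proc_cons (p : α × α) (q : List (α × α)) :
    proc (p :: q) = match proc q with
      | [] => [p]
      | r :: rs => if p.2 = r.1 then (p.1, r.2) :: rs else p :: r :: rs := rfl

theorem proc_spec : ∀ l : List (α × α), (∀ p ∈ l, p.1 < p.2) →
    (proc l = [] ↔ l = []) ∧
    (∀ p ∈ proc l, p.1 < p.2) ∧
    List.Chain' (fun p p' : α × α => p.2 ≠ p'.1) (proc l) ∧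
    ((proc l).map blk).prod = (l.map blk).prod ∧
    (proc l).head?.map Prod.fst = l.head?.map Prod.fst ∧
    (proc l).getLast?.map Prod.snd = l.getLast?.map Prod.snd ∧
    ((proc l).length = 1 → List.Chain' (fun p p' : α × α => p.2 = p'.1) l)
  | [] => fun _ => by simp [proc, List.Chain']
  | p :: q => fun hlt => by
    obtain ⟨ih0, ih1, ih2, ih3, ih4, ih5, ih6⟩ :=
      proc_spec q (fun x hx => hlt x (List.mem_cons_of_mem _ hx))
    have hplt : p.1 < p.2 := hlt p (List.mem_cons_self)
    cases hq : proc q with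
    | nil =>
      have hqnil : q = [] := ih0.mp hq
      subst hqnil
      simp [proc, List.Chain', List.isChain_singleton, hplt]
    | cons r rs =>
      have hqne : q ≠ [] := fun hh => by simp [ih0.mpr hh] at hq
      obtain ⟨a, q', rfl⟩ := List.exists_cons_of_ne_nil hqne
      have hrlt : r.1 < r.2 := ih1 r (by rw [hq]; exact List.mem_cons_self)
      rw [hq] at ih2 ih3 ih4 ih5 ih6
      by_cases hc : p.2 = r.1
      · have hproc : proc (p :: (a :: q')) = (p.1, r.2) :: rs := by
          rw [proc_cons, hq]; exact if_pos hc
        rw [hproc]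
        refine ⟨by simp, ?_, ?_, ?_, ?_, ?_, ?_⟩
        · intro x hx
          rcases List.mem_cons.mp hx with h | h
          · subst h; exact lt_trans (hc ▸ hplt) hrlt
          · exact ih1 x (by rw [hq]; exact List.mem_cons_of_mem _ h)
        · cases rs with
          | nil => exact List.isChain_singleton _
          | cons r' rs' =>
            exact List.isChain_cons_cons.mpr ⟨(List.isChain_cons_cons.mp ih2).1,
              (List.isChain_cons_cons.mp ih2).2⟩
        · rw [List.map_cons, List.prod_cons, List.map_cons, List.prod_cons, ← ih3,
            List.map_cons, List.prod_cons, ← mul_assoc]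
          congr 1
          simp only [blk, hc]
          group
        · simp
        · rw [List.getLast?_cons_cons, ← ih5]
          cases rs with
          | nil => simp
          | cons r' rs' => simp [List.getLast?_cons_cons]
        · intro hlen
          have hrs : rs = [] := by simpa using hlen
          subst hrs
          have hch := ih6 rfl
          have hhead : r.1 = a.1 := by simpa using ih4
          exact List.isChain_cons_cons.mpr ⟨by rw [hc, hhead], hch⟩
      · have hproc : proc (p :: (a :: q')) = p :: r :: rs := by
          rw [proc_cons, hq]; exact if_neg hc
        rw [hproc]
        refine ⟨by simp, ?_, ?_, ?_, ?_, ?_, ?_⟩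
        · intro x hx
          rcases List.mem_cons.mp hx with h | h
          · subst h; exact hplt
          · exact ih1 x (hq ▸ h)
        · exact List.isChain_cons_cons.mpr ⟨hc, ih2⟩
        · simp only [List.map_cons, List.prod_cons]
          rw [← List.prod_cons, ← List.map_cons, ih3]
          simp [List.map_cons, List.prod_cons, mul_assoc]
        · simp
        · rw [List.getLast?_cons_cons, List.getLast?_cons_cons, ih5]
        · intro hlen; simp at hlen



theorem key (l : List (α × α)) (hne : l ≠ []) (hlt : ∀ p ∈ l, p.1 < p.2) (x y : α)
    (hxy : x < y) (h : (l.map blk).prod = blk (x, y)) :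
    List.Chain' (fun p p' : α × α => p.2 = p'.1) l ∧ l.head?.map Prod.fst = some x ∧
      l.getLast?.map Prod.snd = some y := by
  obtain ⟨h0, h1, h2, h3, h4, h5, h6⟩ := proc_spec l hlt
  have hprod : ((proc l).map blk).prod = blk (x, y) := h3.trans h
  have hred : word (proc l) = word [(x, y)] := by
    have e1 : FreeGroup.mk (word (proc l)) = FreeGroup.mk (word [(x, y)]) := by
      rw [← prod_blk, ← prod_blk]
      simpa using hprod
    have e2 := FreeGroup.reduce.sound e1
    rwa [reduce_eq_self _ (chain'_word _ h1 h2),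
      reduce_eq_self _ (chain'_word [(x, y)] (by simpa using hxy) (List.isChain_singleton _))]
      at e2
  have hxy' : word [(x, y)] = [(x, true), (y, false)] := rfl
  rw [hxy'] at hred
  have hp : proc l = [(x, y)] := by
    cases hp : proc l with
    | nil => rw [hp] at hred; simp [word] at hred
    | cons c cs =>
      cases cs with
      | nil =>
        rw [hp] at hred
        simp only [word, List.cons.injEq, Prod.mk.injEq] at hred
        obtain ⟨⟨e1, -⟩, ⟨e2, -⟩, -⟩ := hred
        rw [← e1, ← e2]
      | cons c' cs' => rw [hp] at hred; simp [word] at hred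
  refine ⟨h6 (by rw [hp]; rfl), ?_, ?_⟩
  · rw [← h4, hp]; rfl
  · rw [← h5, hp]; rfl

section Coprod

variable {G : Type*} [Group G]

/-- the coproduct block -/
def blkC (p : α × G × α) : Monoid.Coprod G (FreeGroup α) :=
  Monoid.Coprod.inr (FreeGroup.of p.1) * Monoid.Coprod.inl p.2.1 *
    (Monoid.Coprod.inr (FreeGroup.of p.2.2))⁻¹

theorem tele : ∀ (l : List (α × G × α)) (p : α × G × α),
    List.Chain' (fun a b : α × G × α => a.2.2 = b.1) (p :: l) →
    (((p :: l).map blkC).prod : Monoid.Coprod G (FreeGroup α)) =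
      Monoid.Coprod.inr (FreeGroup.of p.1) *
        Monoid.Coprod.inl (((p :: l).map fun q => q.2.1).prod) *
        (Monoid.Coprod.inr (FreeGroup.of (((p :: l).getLast (List.cons_ne_nil _ _)).2.2)))⁻¹
  | [], p => fun _ => by simp [blkC]
  | r :: l', p => fun hch => by
    have h1 : p.2.2 = r.1 := (List.isChain_cons_cons.mp hch).1
    have ih := tele l' r (List.isChain_cons_cons.mp hch).2
    rw [List.map_cons, List.prod_cons, ih, List.getLast_cons (List.cons_ne_nil _ _)]
    simp only [List.map_cons, List.prod_cons, blkC, h1, map_mul]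
    group

theorem tele' (l : List (α × G × α)) (hne : l ≠ [])
    (hch : List.Chain' (fun a b : α × G × α => a.2.2 = b.1) l) :
    ((l.map blkC).prod : Monoid.Coprod G (FreeGroup α)) =
      Monoid.Coprod.inr (FreeGroup.of ((l.head hne).1)) *
        Monoid.Coprod.inl ((l.map fun q => q.2.1).prod) *
        (Monoid.Coprod.inr (FreeGroup.of ((l.getLast hne).2.2)))⁻¹ := by
  obtain ⟨p, l', rfl⟩ := List.exists_cons_of_ne_nil hne
  exact tele l' p hch

end Coprod

end AgpSsp
/-- Reduction of the acyclic graph word problem to the subset sum problem in `G ∗ F`.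
The graph has vertex set `{1,…,n}` (modeled as `Fin n`) and edges `E₁,…,E_m` with
origins `o i`, termini `t i`, `o i < t i`, labels `u i ∈ G`, and the edge enumeration
is compatible with paths: `t i = o j → i < j`. With `F = FreeGroup (Fin n)`,
`v_j = FreeGroup.of j`, and `g_i = v_{o(i)} u_i v_{t(i)}⁻¹` in `G ∗ F`, a subsequence
product of the `g_i` equals `v₁ v_n⁻¹` iff there is a directed edge path from vertex `1`
to vertex `n` whose labels multiply to `1` in `G`. -/
theorem agp_to_ssp_coprod
    {G : Type*} [Group G] (n m : ℕ) (hn : 2 ≤ n)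
    (o t : Fin m → Fin n) (hot : ∀ i, o i < t i)
    (henum : ∀ i j : Fin m, t i = o j → i < j)
    (u : Fin m → G) :
    (∃ (k : ℕ) (_ : 1 ≤ k) (idx : Fin k → Fin m), StrictMono idx ∧
        (List.ofFn fun j =>
            Monoid.Coprod.inr (FreeGroup.of (o (idx j))) * Monoid.Coprod.inl (u (idx j)) *
              (Monoid.Coprod.inr (FreeGroup.of (t (idx j))) :
                Monoid.Coprod G (FreeGroup (Fin n)))⁻¹).prod =
          Monoid.Coprod.inr (FreeGroup.of (⟨0, by omega⟩ : Fin n)) *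
            (Monoid.Coprod.inr (FreeGroup.of (⟨n - 1, by omega⟩ : Fin n)) :
              Monoid.Coprod G (FreeGroup (Fin n)))⁻¹) ↔
    (∃ (k : ℕ) (hk : 1 ≤ k) (idx : Fin k → Fin m),
        o (idx ⟨0, by omega⟩) = (⟨0, by omega⟩ : Fin n) ∧
        t (idx ⟨k - 1, by omega⟩) = (⟨n - 1, by omega⟩ : Fin n) ∧
        (∀ (j : ℕ) (hj : j + 1 < k), t (idx ⟨j, by omega⟩) = o (idx ⟨j + 1, hj⟩)) ∧
        (List.ofFn fun j => u (idx j)).prod = 1) := by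
  constructor
  · rintro ⟨k, hk, idx, hmono, hprod⟩
    have hkpos : 0 < k := hk
    -- apply the projection to the free group
    have hsnd := congrArg (Monoid.Coprod.snd (M := G) (N := FreeGroup (Fin n))) hprod
    rw [map_list_prod, List.map_ofFn] at hsnd
    simp only [Function.comp_def, map_mul, map_inv, Monoid.Coprod.snd_apply_inr,
      Monoid.Coprod.snd_apply_inl, one_mul, mul_one] at hsnd
    set l : List (Fin n × Fin n) := List.ofFn fun j => (o (idx j), t (idx j)) with hl
    have hlne : l ≠ [] := by
      rw [hl]
      simp only [ne_eq, List.ofFn_eq_nil_iff]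
      omega
    have hlmap : l.map AgpSsp.blk =
        List.ofFn fun j => FreeGroup.of (o (idx j)) * (FreeGroup.of (t (idx j)))⁻¹ := by
      rw [hl, List.map_ofFn]
      rfl
    have hkey := AgpSsp.key l hlne
      (by
        intro p hp
        rw [hl] at hp
        obtain ⟨j, rfl⟩ := List.mem_ofFn.mp hp
        exact hot (idx j))
      (⟨0, by omega⟩ : Fin n) (⟨n - 1, by omega⟩ : Fin n)
      (by simp only [Fin.mk_lt_mk]; omega)
      (by rw [hlmap, AgpSsp.blk]; exact hsnd)
    obtain ⟨hchain, hhead, hlast⟩ := hkey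
    -- the product of the labels
    have hfst := congrArg (Monoid.Coprod.fst (M := G) (N := FreeGroup (Fin n))) hprod
    rw [map_list_prod, List.map_ofFn] at hfst
    simp only [Function.comp_def, map_mul, map_inv, Monoid.Coprod.fst_apply_inr,
      Monoid.Coprod.fst_apply_inl, one_mul, mul_one, inv_one, mul_inv_cancel] at hfst
    refine ⟨k, hk, idx, ?_, ?_, ?_, ?_⟩
    · rw [hl] at hhead
      rw [List.head?_eq_head (by simp only [ne_eq, List.ofFn_eq_nil_iff]; omega),
        List.head_ofFn] at hhead
      simpa using hhead
    · rw [hl] at hlast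
      rw [List.getLast?_eq_getLast (by simp only [ne_eq, List.ofFn_eq_nil_iff]; omega),
        List.getLast_ofFn] at hlast
      simpa using hlast
    · intro j hj
      rw [hl] at hchain
      have h := List.isChain_iff_getElem.mp hchain j (by simp only [List.length_ofFn]; omega)
      simp only [List.getElem_ofFn] at h
      exact h
    · simpa using hfst
  · rintro ⟨k, hk, idx, h1, h2, h3, h4⟩
    obtain ⟨k', rfl⟩ : ∃ k', k = k' + 1 := ⟨k - 1, by omega⟩
    refine ⟨k' + 1, hk, idx, ?_, ?_⟩
    · rw [Fin.strictMono_iff_lt_succ]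
      intro i
      have e1 : (Fin.castSucc i) = (⟨i.val, by omega⟩ : Fin (k' + 1)) := Fin.ext (by simp)
      have e2 : (i.succ : Fin (k' + 1)) = (⟨i.val + 1, by omega⟩ : Fin (k' + 1)) :=
        Fin.ext (by simp)
      rw [e1, e2]
      exact henum _ _ (h3 i.val (by omega))
    · set L : List (Fin n × G × Fin n) :=
        List.ofFn fun j => (o (idx j), u (idx j), t (idx j)) with hL
      have hLne : L ≠ [] := by rw [hL]; simp
      have hch : List.Chain' (fun a b : Fin n × G × Fin n => a.2.2 = b.1)
          (List.ofFn fun j => (o (idx j), u (idx j), t (idx j))) := by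
        refine List.isChain_iff_getElem.mpr ?_
        intro i hi
        simp only [List.length_ofFn] at hi
        simp only [List.getElem_ofFn]
        exact h3 i (by omega)
      rw [← hL] at hch
      have htele := AgpSsp.tele' L hLne hch
      have hmap : List.map AgpSsp.blkC L =
          List.ofFn fun j =>
            Monoid.Coprod.inr (FreeGroup.of (o (idx j))) * Monoid.Coprod.inl (u (idx j)) *
              (Monoid.Coprod.inr (FreeGroup.of (t (idx j))) :
                Monoid.Coprod G (FreeGroup (Fin n)))⁻¹ := by
        rw [hL, List.map_ofFn]
        rfl
      rw [hmap] at htele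
      rw [htele]
      have hhead : (L.head hLne).1 = (⟨0, by omega⟩ : Fin n) := by
        rw [hL] at *
        rw [List.head_ofFn]
        exact h1
      have hlast : (L.getLast hLne).2.2 = (⟨n - 1, by omega⟩ : Fin n) := by
        rw [hL] at *
        rw [List.getLast_ofFn]
        exact h2
      have hmid : (L.map fun q => q.2.1).prod = 1 := by
        rw [hL, List.map_ofFn]
        exact h4
      rw [hhead, hlast, hmid, map_one, mul_one]
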